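/- If a triangulation of the 2-sphere has exactly two vertices of odd degree, then these two vertices are not adjacent. -/

import Mathlib

/-!
Combinatorial triangulated surfaces.

A triangulation is encoded by its finset of faces (each a 3-element finset of
vertices).  `IsClosedSurface` says: nonempty, every face a triangle, every edge
in exactly two faces, and the faces around each vertex are connected through
edges containing that vertex (so the link of every vertex is a single cycle).
A connected closed surface with Euler characteristic 2 is a sphere, with
Euler characteristic 1 is the projective plane, and an orientable one with
Euler characteristic 0 is the torus.  Surfaces with boundary allow edges lying
in exactly one face; a connected such surface is simply connected iff it is a
disk (Euler characteristic 1, with boundary) or a sphere (Euler characteristic 2).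
The degree of a vertex is the number of edges containing it.
-/

namespace Fisk

variable {V : Type*} [DecidableEq V]

/-- The edges of a triangulation: the 2-element subsets of its faces. -/
def edges (F : Finset (Finset V)) : Finset (Finset V) :=
  F.biUnion (fun f => f.powersetCard 2)

/-- The vertex set of a triangulation. -/
def vertices (F : Finset (Finset V)) : Finset V := F.sup id

/-- The degree of a vertex: the number of edges containing it. -/
def degree (F : Finset (Finset V)) (v : V) : ℕ :=
  ((edges F).filter (fun e => v ∈ e)).card

/-- Two vertices are adjacent if they span an edge. -/
def IsAdjacent (F : Finset (Finset V)) (a b : V) : Prop :=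
  a ≠ b ∧ ({a, b} : Finset V) ∈ edges F

/-- The faces are connected under the relation "share an edge". -/
def FacesConnected (F : Finset (Finset V)) : Prop :=
  ∀ f ∈ F, ∀ g ∈ F,
    Relation.ReflTransGen (fun x y => x ∈ F ∧ y ∈ F ∧ (x ∩ y).card = 2) f g

/-- Around every vertex, the faces containing it are connected through
edges containing it (links are connected). -/
def LinkConnected (F : Finset (Finset V)) : Prop :=
  ∀ v : V, ∀ f ∈ F, ∀ g ∈ F, v ∈ f → v ∈ g →
    Relation.ReflTransGen
      (fun x y => x ∈ F ∧ y ∈ F ∧ v ∈ x ∧ v ∈ y ∧ (x ∩ y).card = 2) f g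

/-- A triangulation of a closed surface. -/
def IsClosedSurface (F : Finset (Finset V)) : Prop :=
  F.Nonempty ∧ (∀ f ∈ F, f.card = 3) ∧
  (∀ e ∈ edges F, (F.filter (fun f => e ⊆ f)).card = 2) ∧
  LinkConnected F

/-- The Euler characteristic `#V - #E + #F`. -/
def eulerChar (F : Finset (Finset V)) : ℤ :=
  ((vertices F).card : ℤ) - ((edges F).card : ℤ) + (F.card : ℤ)

/-- A triangulation of the 2-sphere: a connected closed surface with
Euler characteristic 2. -/
def IsSphere (F : Finset (Finset V)) : Prop :=
  IsClosedSurface F ∧ FacesConnected F ∧ eulerChar F = 2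

/-- The oriented edges of an ordered triple. -/
def orientedEdges (t : V × V × V) : Finset (V × V) :=
  {(t.1, t.2.1), (t.2.1, t.2.2), (t.2.2, t.1)}

/-- Orientability: each face can be given a cyclic order of its vertices so
that no directed edge is induced by two different faces (i.e. adjacent faces
induce opposite orientations on their common edge). -/
def Orientable (F : Finset (Finset V)) : Prop :=
  ∃ o : Finset V → V × V × V,
    (∀ f ∈ F, ({(o f).1, (o f).2.1, (o f).2.2} : Finset V) = f) ∧
    (∀ f ∈ F, ∀ g ∈ F, f ≠ g → ∀ p ∈ orientedEdges (o f), p ∉ orientedEdges (o g))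

/-- A triangulation of the torus: a connected orientable closed surface with
Euler characteristic 0. -/
def IsTorus (F : Finset (Finset V)) : Prop :=
  IsClosedSurface F ∧ FacesConnected F ∧ Orientable F ∧ eulerChar F = 0

/-- A triangulation of the projective plane: a connected closed surface with
Euler characteristic 1. -/
def IsProjectivePlane (F : Finset (Finset V)) : Prop :=
  IsClosedSurface F ∧ FacesConnected F ∧ eulerChar F = 1

/-- A triangulation of a surface, possibly with boundary: every edge lies in
one or two faces. -/
def IsSurfaceWithBoundary (F : Finset (Finset V)) : Prop :=
  F.Nonempty ∧ (∀ f ∈ F, f.card = 3) ∧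
  (∀ e ∈ edges F,
    (F.filter (fun f => e ⊆ f)).card = 1 ∨ (F.filter (fun f => e ⊆ f)).card = 2) ∧
  LinkConnected F

/-- The boundary edges: edges lying in exactly one face. -/
def boundaryEdges (F : Finset (Finset V)) : Finset (Finset V) :=
  (edges F).filter (fun e => (F.filter (fun f => e ⊆ f)).card = 1)

/-- The boundary vertices: vertices of boundary edges. -/
def boundaryVertices (F : Finset (Finset V)) : Finset V :=
  (boundaryEdges F).sup id

/-- A compact connected surface (possibly with boundary) is simply connected
iff it is a sphere (χ = 2) or a disk (χ = 1, nonempty boundary). -/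
def IsSimplyConnectedSurface (F : Finset (Finset V)) : Prop :=
  IsSurfaceWithBoundary F ∧ FacesConnected F ∧
    (eulerChar F = 2 ∨ (eulerChar F = 1 ∧ (boundaryEdges F).Nonempty))

/-- A triangulation of a disk (= of a polygon, the corners being the boundary
vertices): a connected surface with nonempty boundary and Euler characteristic 1. -/
def IsDisk (F : Finset (Finset V)) : Prop :=
  IsSurfaceWithBoundary F ∧ FacesConnected F ∧ eulerChar F = 1 ∧
    (boundaryEdges F).Nonempty

/-- A proper vertex coloring: the two endpoints of every edge get distinct
colors (for a triangulation: every triangle receives all three colors). -/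
def ProperColoring {C : Type*} (F : Finset (Finset V)) (c : V → C) : Prop :=
  ∀ e ∈ edges F, ∀ u ∈ e, ∀ w ∈ e, u ≠ w → c u ≠ c w

end Fisk



namespace FiskProof
open Finset Fisk Module
set_option linter.unusedSectionVars false

variable {V : Type*} [DecidableEq V]

lemma card_of_mem_edges {F : Finset (Finset V)} {e : Finset V} (he : e ∈ edges F) : e.card = 2 := by
  rw [edges, mem_biUnion] at he
  obtain ⟨f, -, hf⟩ := he
  exact (Finset.mem_powersetCard.mp hf).2

lemma mem_edges_of {F : Finset (Finset V)} {f e : Finset V} (hf : f ∈ F) (hef : e ⊆ f)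
    (hc : e.card = 2) : e ∈ edges F := by
  rw [edges, mem_biUnion]
  exact ⟨f, hf, Finset.mem_powersetCard.mpr ⟨hef, hc⟩⟩

lemma exists_face {F : Finset (Finset V)} {e : Finset V} (he : e ∈ edges F) :
    ∃ f ∈ F, e ⊆ f := by
  rw [edges, mem_biUnion] at he
  obtain ⟨f, hf, hs⟩ := he
  exact ⟨f, hf, (Finset.mem_powersetCard.mp hs).1⟩

lemma mem_vertices_iff {F : Finset (Finset V)} {v : V} :
    v ∈ vertices F ↔ ∃ f ∈ F, v ∈ f := by
  simp [vertices, Finset.mem_sup]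

lemma edge_vertex_mem {F : Finset (Finset V)} {e : Finset V} (he : e ∈ edges F) {v : V}
    (hv : v ∈ e) : v ∈ vertices F := by
  obtain ⟨f, hf, hs⟩ := exists_face he
  exact mem_vertices_iff.mpr ⟨f, hf, hs hv⟩

lemma filter_edges_subset {F : Finset (Finset V)} {f : Finset V} (hf : f ∈ F) :
    (edges F).filter (fun e => e ⊆ f) = f.powersetCard 2 := by
  ext e
  simp only [mem_filter, Finset.mem_powersetCard]
  exact ⟨fun ⟨he, hs⟩ => ⟨hs, card_of_mem_edges he⟩,
    fun ⟨hs, hc⟩ => ⟨mem_edges_of hf hs hc, hs⟩⟩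

noncomputable def bdry (F : Finset (Finset V)) :
    (↥(edges F) → ZMod 2) →ₗ[ZMod 2] (↥F → ZMod 2) :=
  Matrix.toLin' (fun (f : ↥F) (e : ↥(edges F)) => if (e : Finset V) ⊆ (f : Finset V) then 1 else 0)

noncomputable def lnk (F : Finset (Finset V)) :
    (↥(vertices F) → ZMod 2) →ₗ[ZMod 2] (↥(edges F) → ZMod 2) :=
  Matrix.toLin' (fun (e : ↥(edges F)) (v : ↥(vertices F)) => if (v : V) ∈ (e : Finset V) then 1 else 0)

noncomputable def sig (F : Finset (Finset V)) : (↥F → ZMod 2) →ₗ[ZMod 2] ZMod 2 :=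
  ∑ f : ↥F, LinearMap.proj f

lemma bdry_apply (F : Finset (Finset V)) (x : ↥(edges F) → ZMod 2) (f : ↥F) :
    bdry F x f = ∑ e : ↥(edges F), (if (e : Finset V) ⊆ (f : Finset V) then 1 else 0) * x e := by
  change Matrix.toLin' (Matrix.of fun (f : ↥F) (e : ↥(edges F)) => if (e : Finset V) ⊆ (f : Finset V) then (1 : ZMod 2) else 0) x f = _
  simp [Matrix.toLin'_apply, Matrix.mulVec, dotProduct]

lemma lnk_apply (F : Finset (Finset V)) (S : ↥(vertices F) → ZMod 2) (e : ↥(edges F)) :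
    lnk F S e = ∑ v : ↥(vertices F), (if (v : V) ∈ (e : Finset V) then 1 else 0) * S v := by
  change Matrix.toLin' (Matrix.of fun (e : ↥(edges F)) (v : ↥(vertices F)) => if (v : V) ∈ (e : Finset V) then (1 : ZMod 2) else 0) S e = _
  simp [Matrix.toLin'_apply, Matrix.mulVec, dotProduct]

lemma sig_apply (F : Finset (Finset V)) (x : ↥F → ZMod 2) : sig F x = ∑ f : ↥F, x f := by
  simp [sig]

lemma two_faces {F : Finset (Finset V)}
    (htwo : ∀ e ∈ edges F, (F.filter (fun f => e ⊆ f)).card = 2)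
    (e : ↥(edges F)) :
    ∃ f g : ↥F, f ≠ g ∧ (∀ f' : ↥F, (e : Finset V) ⊆ (f' : Finset V) ↔ f' = f ∨ f' = g) := by
  obtain ⟨x, y, hxy, hset⟩ := Finset.card_eq_two.mp (htwo e e.2)
  have hx : x ∈ F := by
    have := hset ▸ (Finset.mem_insert_self x {y}); exact (mem_filter.mp this).1
  have hy : y ∈ F := by
    have : y ∈ F.filter (fun f => (e : Finset V) ⊆ f) := by rw [hset]; simp
    exact (mem_filter.mp this).1
  refine ⟨⟨x, hx⟩, ⟨y, hy⟩, by simpa [Subtype.ext_iff] using hxy, fun f' => ?_⟩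
  constructor
  · intro hs
    have : (f' : Finset V) ∈ F.filter (fun f => (e : Finset V) ⊆ f) := mem_filter.mpr ⟨f'.2, hs⟩
    rw [hset] at this
    simp only [mem_insert, mem_singleton] at this
    rcases this with h | h
    · exact Or.inl (Subtype.ext h)
    · exact Or.inr (Subtype.ext h)
  · rintro (rfl | rfl)
    · have : x ∈ F.filter (fun f => (e : Finset V) ⊆ f) := by rw [hset]; simp
      exact (mem_filter.mp this).2
    · have : y ∈ F.filter (fun f => (e : Finset V) ⊆ f) := by rw [hset]; simp
      exact (mem_filter.mp this).2

lemma bdry_single {F : Finset (Finset V)} (e : ↥(edges F)) {f g : ↥F} (hfg : f ≠ g)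
    (hch : ∀ f' : ↥F, (e : Finset V) ⊆ (f' : Finset V) ↔ f' = f ∨ f' = g) :
    bdry F (Pi.single e 1) = Pi.single f 1 + Pi.single g 1 := by
  change Matrix.toLin' (Matrix.of fun (f : ↥F) (e : ↥(edges F)) => if (e : Finset V) ⊆ (f : Finset V) then (1 : ZMod 2) else 0) (Pi.single e 1) = _
  rw [Matrix.toLin'_apply, Matrix.mulVec_single]
  funext f'
  simp only [Pi.add_apply, Pi.single_apply, mul_one, MulOpposite.op_one, one_smul, Matrix.col_apply,
    Matrix.of_apply]
  rw [if_congr (hch f') rfl rfl]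
  rcases eq_or_ne f' f with rfl | h1 <;> rcases eq_or_ne f' g with rfl | h2 <;> simp_all

lemma sig_bdry {F : Finset (Finset V)}
    (htwo : ∀ e ∈ edges F, (F.filter (fun f => e ⊆ f)).card = 2)
    (x : ↥(edges F) → ZMod 2) : sig F (bdry F x) = 0 := by
  have key : ∀ e : ↥(edges F),
      ∑ f : ↥F, (if (e : Finset V) ⊆ (f : Finset V) then (1 : ZMod 2) else 0) * x e = 0 := by
    intro e
    rw [← Finset.sum_mul]
    have h2 : ∑ f : ↥F, (if (e : Finset V) ⊆ (f : Finset V) then (1 : ZMod 2) else 0)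
        = ((F.filter (fun f => (e : Finset V) ⊆ f)).card : ZMod 2) := by
      rw [Finset.sum_coe_sort F (fun f => if (e : Finset V) ⊆ f then (1 : ZMod 2) else 0)]
      simp [Finset.sum_boole]
    rw [h2, htwo _ e.2]
    simp
    left; decide
  calc sig F (bdry F x)
      = ∑ f : ↥F, ∑ e : ↥(edges F),
          (if (e : Finset V) ⊆ (f : Finset V) then (1 : ZMod 2) else 0) * x e := by
        rw [sig_apply]; exact Finset.sum_congr rfl fun f _ => bdry_apply F x f
    _ = ∑ e : ↥(edges F), ∑ f : ↥F,
          (if (e : Finset V) ⊆ (f : Finset V) then (1 : ZMod 2) else 0) * x e := Finset.sum_comm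
    _ = 0 := Finset.sum_eq_zero fun e _ => key e

lemma zmod2_add_eq_zero : ∀ a b : ZMod 2, a + b = 0 → a = b := by decide

lemma pair_mem_range {F : Finset (Finset V)}
    (hcard3 : ∀ f ∈ F, f.card = 3)
    (htwo : ∀ e ∈ edges F, (F.filter (fun f => e ⊆ f)).card = 2)
    (hconn : FacesConnected F) (f g : ↥F) :
    (Pi.single f 1 + Pi.single g 1 : ↥F → ZMod 2) ∈ LinearMap.range (bdry F) := by
  have step : ∀ p q : Finset V, (p ∈ F ∧ q ∈ F ∧ (p ∩ q).card = 2) →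
      ∀ (hp : p ∈ F) (hq : q ∈ F),
      (Pi.single (⟨p, hp⟩ : ↥F) 1 + Pi.single (⟨q, hq⟩ : ↥F) 1 : ↥F → ZMod 2)
        ∈ LinearMap.range (bdry F) := by
    rintro p q ⟨hp', hq', hpq⟩ hp hq
    have hne : p ≠ q := by
      intro h; subst h
      rw [Finset.inter_self] at hpq
      rw [hcard3 p hp] at hpq; omega
    have hemem : p ∩ q ∈ edges F :=
      mem_edges_of hp (Finset.inter_subset_left) hpq
    have hfil : F.filter (fun f' => p ∩ q ⊆ f') = {p, q} := by
      refine (Finset.eq_of_subset_of_card_le ?_ ?_).symm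
      · intro r hr
        simp only [mem_insert, mem_singleton] at hr
        rcases hr with rfl | rfl
        · exact mem_filter.mpr ⟨hp, Finset.inter_subset_left⟩
        · exact mem_filter.mpr ⟨hq, Finset.inter_subset_right⟩
      · rw [htwo _ hemem, Finset.card_pair hne]
    have hch : ∀ f' : ↥F, ((⟨p ∩ q, hemem⟩ : ↥(edges F)) : Finset V) ⊆ (f' : Finset V) ↔
        f' = ⟨p, hp⟩ ∨ f' = ⟨q, hq⟩ := by
      intro f'
      constructor
      · intro hs
        have : (f' : Finset V) ∈ F.filter (fun f' => p ∩ q ⊆ f') := mem_filter.mpr ⟨f'.2, hs⟩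
        rw [hfil] at this
        simp only [mem_insert, mem_singleton] at this
        rcases this with h | h
        · exact Or.inl (Subtype.ext h)
        · exact Or.inr (Subtype.ext h)
      · rintro (rfl | rfl)
        · exact Finset.inter_subset_left
        · exact Finset.inter_subset_right
    have hne' : (⟨p, hp⟩ : ↥F) ≠ ⟨q, hq⟩ := by simpa [Subtype.ext_iff] using hne
    exact ⟨Pi.single ⟨p ∩ q, hemem⟩ 1, bdry_single _ hne' hch⟩
  have main : ∀ q : Finset V,
      Relation.ReflTransGen (fun x y => x ∈ F ∧ y ∈ F ∧ (x ∩ y).card = 2) (f : Finset V) q →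
      ∀ hq : q ∈ F,
      (Pi.single f 1 + Pi.single (⟨q, hq⟩ : ↥F) 1 : ↥F → ZMod 2)
        ∈ LinearMap.range (bdry F) := by
    intro q h
    induction h with
    | refl =>
      intro hq
      have : (⟨(f : Finset V), hq⟩ : ↥F) = f := Subtype.ext rfl
      rw [this]
      have : (Pi.single f 1 + Pi.single f 1 : ↥F → ZMod 2) = 0 := by
        funext u; simp only [Pi.add_apply, Pi.zero_apply, Pi.single_apply]
        split <;> decide
      rw [this]; exact Submodule.zero_mem _
    | @tail b c h1 h2 ih =>
      intro hc
      have hb : b ∈ F := h2.1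
      have key1 := ih hb
      have key2 := step b c h2 hb hc
      have heq : (Pi.single f 1 + Pi.single (⟨c, hc⟩ : ↥F) 1 : ↥F → ZMod 2)
          = (Pi.single f 1 + Pi.single (⟨b, hb⟩ : ↥F) 1)
            + (Pi.single (⟨b, hb⟩ : ↥F) 1 + Pi.single (⟨c, hc⟩ : ↥F) 1) := by
        funext u
        simp only [Pi.add_apply, Pi.single_apply]
        split_ifs <;> decide
      rw [heq]
      exact Submodule.add_mem _ key1 key2
  have : (⟨(g : Finset V), g.2⟩ : ↥F) = g := Subtype.ext rfl
  exact this ▸ main (g : Finset V) (hconn _ f.2 _ g.2) g.2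

lemma range_bdry_eq {F : Finset (Finset V)} (hne : F.Nonempty)
    (hcard3 : ∀ f ∈ F, f.card = 3)
    (htwo : ∀ e ∈ edges F, (F.filter (fun f => e ⊆ f)).card = 2)
    (hconn : FacesConnected F) :
    LinearMap.range (bdry F) = LinearMap.ker (sig F) := by
  apply le_antisymm
  · rintro y ⟨x, rfl⟩
    exact LinearMap.mem_ker.mpr (sig_bdry htwo x)
  · intro x hx
    obtain ⟨f0, hf0⟩ := hne
    set f0' : ↥F := ⟨f0, hf0⟩
    have hx0 : ∑ f : ↥F, x f = 0 := by
      have := LinearMap.mem_ker.mp hx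
      rwa [sig_apply] at this
    have hrep : x = ∑ f : ↥F, x f • (Pi.single f 1 + Pi.single f0' 1 : ↥F → ZMod 2) := by
      funext u
      rw [Finset.sum_apply]
      simp only [Pi.smul_apply, Pi.add_apply, Pi.single_apply, smul_eq_mul, mul_add]
      rw [Finset.sum_add_distrib]
      have e1 : ∑ f : ↥F, x f * (if u = f then (1 : ZMod 2) else 0) = x u := by
        simp [mul_ite, Finset.sum_ite_eq]
      have e2 : ∑ f : ↥F, x f * (if u = f0' then (1 : ZMod 2) else 0) = 0 := by
        rw [← Finset.sum_mul, hx0, zero_mul]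
      rw [e1, e2, add_zero]
    rw [hrep]
    exact Submodule.sum_mem _ fun f _ =>
      Submodule.smul_mem _ _ (pair_mem_range hcard3 htwo hconn f f0')

lemma finrank_ker_bdry {F : Finset (Finset V)} (hne : F.Nonempty)
    (hcard3 : ∀ f ∈ F, f.card = 3)
    (htwo : ∀ e ∈ edges F, (F.filter (fun f => e ⊆ f)).card = 2)
    (hconn : FacesConnected F) :
    finrank (ZMod 2) (LinearMap.ker (bdry F)) + F.card = (edges F).card + 1 := by
  have h1 := LinearMap.finrank_range_add_finrank_ker (bdry F)
  have h2 := LinearMap.finrank_range_add_finrank_ker (sig F)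
  rw [Module.finrank_pi, Fintype.card_coe] at h1 h2
  have hsurj : LinearMap.range (sig F) = ⊤ := by
    rw [LinearMap.range_eq_top]
    intro c
    obtain ⟨f0, hf0⟩ := hne
    refine ⟨c • Pi.single (⟨f0, hf0⟩ : ↥F) 1, ?_⟩
    rw [map_smul, sig_apply]
    simp [Pi.single_apply, Finset.sum_ite_eq]
  rw [hsurj, finrank_top, Module.finrank_self] at h2
  have h3 : finrank (ZMod 2) (LinearMap.range (bdry F))
      = finrank (ZMod 2) (LinearMap.ker (sig F)) := by
    rw [range_bdry_eq hne hcard3 htwo hconn]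
  omega


noncomputable def ext0 (F : Finset (Finset V)) (S : ↥(vertices F) → ZMod 2) : V → ZMod 2 :=
  fun v => if h : v ∈ vertices F then S ⟨v, h⟩ else 0

lemma ext0_coe (F : Finset (Finset V)) (S : ↥(vertices F) → ZMod 2) (v : ↥(vertices F)) :
    ext0 F S (v : V) = S v := by
  simp [ext0]

lemma lnk_apply' (F : Finset (Finset V)) (S : ↥(vertices F) → ZMod 2) (e : ↥(edges F)) :
    lnk F S e = ∑ v ∈ (e : Finset V), ext0 F S v := by
  rw [lnk_apply]
  have h1 : ∀ v : ↥(vertices F),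
      (if (v : V) ∈ (e : Finset V) then (1 : ZMod 2) else 0) * S v
      = (if (v : V) ∈ (e : Finset V) then (1 : ZMod 2) else 0) * ext0 F S (v : V) := by
    intro v; rw [ext0_coe]
  rw [Finset.sum_congr rfl fun v _ => h1 v]
  rw [Finset.sum_coe_sort (vertices F)
    (fun v => (if v ∈ (e : Finset V) then (1 : ZMod 2) else 0) * ext0 F S v)]
  simp only [ite_mul, one_mul, zero_mul]
  rw [← Finset.sum_filter]
  congr 1
  ext v
  simp only [mem_filter]
  exact ⟨fun h => h.2, fun h => ⟨edge_vertex_mem e.2 h, h⟩⟩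

lemma lnk_one (F : Finset (Finset V)) : lnk F (1 : ↥(vertices F) → ZMod 2) = 0 := by
  funext e
  rw [lnk_apply']
  have : ∀ v ∈ (e : Finset V), ext0 F (1 : ↥(vertices F) → ZMod 2) v = 1 := by
    intro v hv
    have := edge_vertex_mem e.2 hv
    simp [ext0, this]
  rw [Pi.zero_apply, Finset.sum_congr rfl this, Finset.sum_const, card_of_mem_edges e.2,
    nsmul_eq_mul]
  decide

lemma ker_lnk_constant {F : Finset (Finset V)}
    (hcard3 : ∀ f ∈ F, f.card = 3) (hconn : FacesConnected F)
    {S : ↥(vertices F) → ZMod 2} (hS : lnk F S = 0) (u w : ↥(vertices F)) : S u = S w := by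
  set T := ext0 F S with hT
  have edge_eq : ∀ e ∈ edges F, ∀ p ∈ e, ∀ q ∈ e, T p = T q := by
    intro e he p hp q hq
    rcases eq_or_ne p q with rfl | hpq
    · rfl
    obtain ⟨p', q', hpq', hset⟩ := Finset.card_eq_two.mp (card_of_mem_edges he)
    have hsum : ∑ v ∈ e, T v = 0 := by
      have := congrFun hS ⟨e, he⟩
      rwa [lnk_apply'] at this
    have hpair : T p' + T q' = 0 := by
      rwa [hset, Finset.sum_pair hpq'] at hsum
    have hpq'' := zmod2_add_eq_zero _ _ hpair
    subst hset
    simp only [mem_insert, mem_singleton] at hp hq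
    rcases hp with rfl | rfl <;> rcases hq with rfl | rfl <;> simp_all
  have face_eq : ∀ f ∈ F, ∀ p ∈ f, ∀ q ∈ f, T p = T q := by
    intro f hf p hp q hq
    rcases eq_or_ne p q with rfl | hpq
    · rfl
    have hmem : ({p, q} : Finset V) ∈ edges F :=
      mem_edges_of hf (by simp [Finset.insert_subset_iff, hp, hq]) (Finset.card_pair hpq)
    exact edge_eq _ hmem p (by simp) q (by simp)
  have chain : ∀ p q : Finset V,
      Relation.ReflTransGen (fun x y => x ∈ F ∧ y ∈ F ∧ (x ∩ y).card = 2) p q →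
      p ∈ F → ∀ a ∈ p, ∀ b ∈ q, T a = T b := by
    intro p q h
    induction h with
    | refl => intro hp a ha b hb; exact face_eq p hp a ha b hb
    | @tail m n h1 h2 ih =>
      intro hp a ha b hb
      have hm : m ∈ F := h2.1
      have hn : n ∈ F := h2.2.1
      have : (m ∩ n).Nonempty := by
        rw [← Finset.card_pos, h2.2.2]; omega
      obtain ⟨z, hz⟩ := this
      calc T a = T z := ih hp a ha z (Finset.mem_of_mem_inter_left hz)
        _ = T b := face_eq n hn z (Finset.mem_of_mem_inter_right hz) b hb
  obtain ⟨f, hf, hu⟩ := mem_vertices_iff.mp u.2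
  obtain ⟨g, hg, hw⟩ := mem_vertices_iff.mp w.2
  have := chain f g (hconn f hf g hg) hf (u : V) hu (w : V) hw
  rwa [hT, ext0_coe, ext0_coe] at this

lemma ker_lnk_eq {F : Finset (Finset V)}
    (hcard3 : ∀ f ∈ F, f.card = 3) (hconn : FacesConnected F) (v0 : ↥(vertices F)) :
    LinearMap.ker (lnk F) = Submodule.span (ZMod 2) {(1 : ↥(vertices F) → ZMod 2)} := by
  apply le_antisymm
  · intro S hS
    have hconst := ker_lnk_constant hcard3 hconn (LinearMap.mem_ker.mp hS)
    have : S = S v0 • (1 : ↥(vertices F) → ZMod 2) := by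
      funext u
      simp [hconst u v0]
    rw [this]
    exact Submodule.smul_mem _ _ (Submodule.mem_span_singleton_self _)
  · rw [Submodule.span_le]
    intro x hx
    rw [Set.mem_singleton_iff] at hx
    subst hx
    exact LinearMap.mem_ker.mpr (lnk_one F)

lemma finrank_range_lnk {F : Finset (Finset V)}
    (hcard3 : ∀ f ∈ F, f.card = 3) (hconn : FacesConnected F) (v0 : ↥(vertices F)) :
    finrank (ZMod 2) (LinearMap.range (lnk F)) + 1 = (vertices F).card := by
  have h1 := LinearMap.finrank_range_add_finrank_ker (lnk F)
  rw [Module.finrank_pi, Fintype.card_coe] at h1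
  have h2 : finrank (ZMod 2) (LinearMap.ker (lnk F)) = 1 := by
    rw [ker_lnk_eq hcard3 hconn v0]
    apply finrank_span_singleton
    intro h
    have := congrFun h v0
    simp at this
  omega

lemma powersetCard_two_triple {x y z : V} (hxy : x ≠ y) (hxz : x ≠ z) (hyz : y ≠ z) :
    ({x, y, z} : Finset V).powersetCard 2 = {{x, y}, {x, z}, {y, z}} := by
  ext e
  simp only [Finset.mem_powersetCard, mem_insert, mem_singleton]
  constructor
  · rintro ⟨hsub, hcard⟩
    obtain ⟨p, q, hpq, rfl⟩ := Finset.card_eq_two.mp hcard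
    have hp := hsub (Finset.mem_insert_self p {q})
    have hq := hsub (Finset.mem_insert_of_mem (Finset.mem_singleton_self q))
    simp only [mem_insert, mem_singleton] at hp hq
    rcases hp with rfl | rfl | rfl <;> rcases hq with rfl | rfl | rfl <;>
      simp_all [Finset.pair_comm]
  · rintro (rfl | rfl | rfl) <;>
      refine ⟨by intro t ht; simp only [mem_insert, mem_singleton] at ht ⊢; tauto, ?_⟩
    · exact Finset.card_pair hxy
    · exact Finset.card_pair hxz
    · exact Finset.card_pair hyz

lemma bdry_lnk {F : Finset (Finset V)} (hcard3 : ∀ f ∈ F, f.card = 3)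
    (S : ↥(vertices F) → ZMod 2) : bdry F (lnk F S) = 0 := by
  funext f
  rw [bdry_apply, Pi.zero_apply]
  have h1 : ∀ e : ↥(edges F),
      (if (e : Finset V) ⊆ (f : Finset V) then (1 : ZMod 2) else 0) * lnk F S e
      = (if (e : Finset V) ⊆ (f : Finset V) then (1 : ZMod 2) else 0)
          * ∑ v ∈ (e : Finset V), ext0 F S v := by
    intro e; rw [lnk_apply']
  rw [Finset.sum_congr rfl fun e _ => h1 e]
  rw [Finset.sum_coe_sort (edges F)
    (fun e => (if e ⊆ (f : Finset V) then (1 : ZMod 2) else 0) * ∑ v ∈ e, ext0 F S v)]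
  simp only [ite_mul, one_mul, zero_mul]
  rw [← Finset.sum_filter, filter_edges_subset f.2]
  obtain ⟨x, y, z, hxy, hxz, hyz, hf⟩ := Finset.card_eq_three.mp (hcard3 _ f.2)
  rw [hf, powersetCard_two_triple hxy hxz hyz]
  have h2 : ({x, y} : Finset V) ∉ ({{x, z}, {y, z}} : Finset (Finset V)) := by
    simp only [mem_insert, mem_singleton]
    push_neg
    constructor <;> intro h
    · have : z ∈ ({x, y} : Finset V) := h ▸ (by simp)
      simp only [mem_insert, mem_singleton] at this
      tauto
    · have : x ∈ ({y, z} : Finset V) := h ▸ (by simp)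
      simp only [mem_insert, mem_singleton] at this
      tauto
  have h3 : ({x, z} : Finset V) ∉ ({{y, z}} : Finset (Finset V)) := by
    simp only [mem_singleton]
    intro h
    have : x ∈ ({y, z} : Finset V) := h ▸ (by simp)
    simp only [mem_insert, mem_singleton] at this
    tauto
  rw [Finset.sum_insert h2, Finset.sum_insert h3, Finset.sum_singleton]
  rw [Finset.sum_pair hxy, Finset.sum_pair hxz, Finset.sum_pair hyz]
  generalize ext0 F S x = a
  generalize ext0 F S y = b
  generalize ext0 F S z = c
  revert a b c
  decide

lemma ker_bdry_eq_range_lnk {F : Finset (Finset V)} (hne : F.Nonempty)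
    (hcard3 : ∀ f ∈ F, f.card = 3)
    (htwo : ∀ e ∈ edges F, (F.filter (fun f => e ⊆ f)).card = 2)
    (hconn : FacesConnected F)
    (heuler : ((vertices F).card : ℤ) - ((edges F).card : ℤ) + (F.card : ℤ) = 2) :
    LinearMap.ker (bdry F) = LinearMap.range (lnk F) := by
  obtain ⟨f0, hf0⟩ := hne
  have hv0 : ∃ v, v ∈ vertices F := by
    have h3 := hcard3 f0 hf0
    have : f0.Nonempty := by rw [← Finset.card_pos, h3]; omega
    obtain ⟨v, hv⟩ := this
    exact ⟨v, mem_vertices_iff.mpr ⟨f0, hf0, hv⟩⟩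
  obtain ⟨v0, hv0⟩ := hv0
  have hle : LinearMap.range (lnk F) ≤ LinearMap.ker (bdry F) := by
    rintro y ⟨S, rfl⟩
    exact LinearMap.mem_ker.mpr (bdry_lnk hcard3 S)
  have h1 := finrank_ker_bdry ⟨f0, hf0⟩ hcard3 htwo hconn
  have h2 := finrank_range_lnk hcard3 hconn ⟨v0, hv0⟩
  refine (Submodule.eq_of_le_of_finrank_le hle ?_).symm
  omega


lemma zmod2_even_smul {n : ℕ} (hn : Even n) (x : ZMod 2) : n • x = 0 := by
  obtain ⟨m, rfl⟩ := hn
  have : ∀ a : ZMod 2, a + a = 0 := by decide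
  rw [add_smul]
  exact this _

noncomputable def wfun (F : Finset (Finset V)) (a b : V) :
    (↥(edges F) → ZMod 2) →ₗ[ZMod 2] ZMod 2 :=
  ∑ e ∈ Finset.univ.filter (fun e : ↥(edges F) => (e : Finset V) ≠ {a, b}),
    LinearMap.proj e

lemma wfun_apply (F : Finset (Finset V)) (a b : V) (x : ↥(edges F) → ZMod 2) :
    wfun F a b x = ∑ e ∈ Finset.univ.filter
      (fun e : ↥(edges F) => (e : Finset V) ≠ {a, b}), x e := by
  simp [wfun]

lemma wfun_lnk {F : Finset (Finset V)} {a b : V}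
    (hab_mem : ({a, b} : Finset V) ∈ edges F)
    (hoa : Odd (degree F a)) (hob : Odd (degree F b))
    (heven : ∀ v ∈ vertices F, v ≠ a → v ≠ b → Even (degree F v))
    (S : ↥(vertices F) → ZMod 2) : wfun F a b (lnk F S) = 0 := by
  rw [wfun_apply]
  have h1 : ∀ e : ↥(edges F), lnk F S e = ∑ v ∈ (e : Finset V), ext0 F S v :=
    lnk_apply' F S
  rw [Finset.sum_congr rfl fun e _ => h1 e]
  rw [Finset.sum_filter]
  rw [Finset.sum_coe_sort (edges F)
    (fun e => if e ≠ ({a, b} : Finset V) then ∑ v ∈ e, ext0 F S v else 0)]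
  rw [← Finset.sum_filter]
  set s' : Finset (Finset V) := (edges F).filter (fun e => e ≠ ({a, b} : Finset V)) with hs'
  have hsub : ∀ e ∈ s', ∑ v ∈ e, ext0 F S v
      = ∑ v ∈ vertices F, if v ∈ e then ext0 F S v else 0 := by
    intro e he
    rw [← Finset.sum_filter]
    congr 1
    ext v
    simp only [mem_filter]
    have he' : e ∈ edges F := (mem_filter.mp he).1
    exact ⟨fun h => ⟨edge_vertex_mem he' h, h⟩, fun h => h.2⟩
  rw [Finset.sum_congr rfl hsub, Finset.sum_comm]
  apply Finset.sum_eq_zero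
  intro v hv
  rw [← Finset.sum_filter, Finset.sum_const]
  apply zmod2_even_smul
  have hcomm : s'.filter (fun e => v ∈ e)
      = ((edges F).filter (fun e => v ∈ e)).erase ({a, b} : Finset V) := by
    rw [hs', Finset.filter_comm, Finset.filter_ne']
  rw [hcomm]
  by_cases hvab : v ∈ ({a, b} : Finset V)
  · have hmem : ({a, b} : Finset V) ∈ (edges F).filter (fun e => v ∈ e) :=
      mem_filter.mpr ⟨hab_mem, hvab⟩
    rw [Finset.card_erase_of_mem hmem]
    have : Odd (degree F v) := by
      simp only [mem_insert, mem_singleton] at hvab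
      rcases hvab with rfl | rfl
      · exact hoa
      · exact hob
    exact Nat.Odd.sub_odd this odd_one
  · have hnmem : ({a, b} : Finset V) ∉ (edges F).filter (fun e => v ∈ e) := by
      intro h
      exact hvab (mem_filter.mp h).2
    rw [Finset.erase_eq_of_notMem hnmem]
    simp only [mem_insert, mem_singleton] at hvab
    push_neg at hvab
    exact heven v hv hvab.1 hvab.2


lemma exists_col {F : Finset (Finset V)} {a b : V} (hne : F.Nonempty)
    (hcard3 : ∀ f ∈ F, f.card = 3)
    (htwo : ∀ e ∈ edges F, (F.filter (fun f => e ⊆ f)).card = 2)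
    (hconn : FacesConnected F)
    (heuler : ((vertices F).card : ℤ) - ((edges F).card : ℤ) + (F.card : ℤ) = 2)
    (hab_mem : ({a, b} : Finset V) ∈ edges F)
    (hoa : Odd (degree F a)) (hob : Odd (degree F b))
    (heven : ∀ v ∈ vertices F, v ≠ a → v ≠ b → Even (degree F v)) :
    ∃ col : ↥F → ZMod 2, ∀ (e : ↥(edges F)) (f g : ↥F), f ≠ g →
      (∀ f' : ↥F, (e : Finset V) ⊆ (f' : Finset V) ↔ f' = f ∨ f' = g) →
      col f + col g = (if (e : Finset V) = ({a, b} : Finset V) then 0 else 1) := by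
  have hker : LinearMap.ker (bdry F) ≤ LinearMap.ker (wfun F a b) := by
    intro x hx
    rw [ker_bdry_eq_range_lnk hne hcard3 htwo hconn heuler] at hx
    obtain ⟨S, rfl⟩ := hx
    exact LinearMap.mem_ker.mpr (wfun_lnk hab_mem hoa hob heven S)
  obtain ⟨q, hq⟩ := Submodule.exists_isCompl (LinearMap.range (bdry F))
  set ψ : (↥F → ZMod 2) →ₗ[ZMod 2] ZMod 2 :=
    (((LinearMap.ker (bdry F)).liftQ (wfun F a b) hker).comp
      (bdry F).quotKerEquivRange.symm.toLinearMap).comp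
      ((LinearMap.range (bdry F)).linearProjOfIsCompl q hq) with hψ
  have key : ∀ x : ↥(edges F) → ZMod 2, ψ (bdry F x) = wfun F a b x := by
    intro x
    have hmem : bdry F x ∈ LinearMap.range (bdry F) := LinearMap.mem_range_self _ x
    have hproj : ((LinearMap.range (bdry F)).linearProjOfIsCompl q hq) (bdry F x)
        = ⟨bdry F x, hmem⟩ :=
      Submodule.linearProjOfIsCompl_apply_left hq ⟨bdry F x, hmem⟩
    rw [hψ]
    simp only [LinearMap.comp_apply, hproj, LinearEquiv.coe_toLinearMap]
    rw [LinearMap.quotKerEquivRange_symm_apply_image (bdry F) x hmem]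
    rw [Submodule.mkQ_apply, Submodule.liftQ_apply]
  refine ⟨fun f => ψ (Pi.single f 1), ?_⟩
  intro e f g hfg hch
  have h1 : ψ (Pi.single f 1) + ψ (Pi.single g 1) = ψ (bdry F (Pi.single e 1)) := by
    rw [bdry_single e hfg hch, map_add]
  rw [h1, key, wfun_apply]
  by_cases hab : (e : Finset V) = ({a, b} : Finset V)
  · rw [if_pos hab]
    apply Finset.sum_eq_zero
    intro e' he'
    have : e' ≠ e := by
      intro h; subst h
      exact (mem_filter.mp he').2 hab
    exact Pi.single_eq_of_ne (by simpa using this) 1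
  · rw [if_neg hab]
    rw [Finset.sum_eq_single_of_mem e (mem_filter.mpr ⟨mem_univ e, hab⟩)]
    · exact Pi.single_eq_same e 1
    · intro e' _ hne'
      exact Pi.single_eq_of_ne (by simpa using hne') 1


end FiskProof

open Finset FiskProof in
open Fisk in
/-- **Fisk's theorem.** If a triangulation of the 2-sphere has exactly two
vertices of odd degree, then these vertices are not adjacent. -/
theorem fisk_two_odd_vertices_not_adjacent {V : Type*} [DecidableEq V]
    (F : Finset (Finset V)) (hF : IsSphere F) (a b : V)
    (ha : a ∈ vertices F) (hb : b ∈ vertices F) (hab : a ≠ b)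
    (hoa : Odd (degree F a)) (hob : Odd (degree F b))
    (honly : ∀ v ∈ vertices F, Odd (degree F v) → v = a ∨ v = b) :
    ¬ IsAdjacent F a b := by
  classical
  intro hadj
  obtain ⟨⟨hne, hcard3, htwo, -⟩, hconn, heuler⟩ := hF
  have heuler' : ((vertices F).card : ℤ) - ((edges F).card : ℤ) + (F.card : ℤ) = 2 := heuler
  have hab_mem : ({a, b} : Finset V) ∈ edges F := hadj.2
  have heven : ∀ v ∈ vertices F, v ≠ a → v ≠ b → Even (degree F v) := by
    intro v hv hva hvb
    rcases Nat.even_or_odd (degree F v) with h | h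
    · exact h
    · rcases honly v hv h with rfl | rfl
      · exact absurd rfl hva
      · exact absurd rfl hvb
  obtain ⟨col, hcol⟩ :=
    FiskProof.exists_col hne hcard3 htwo hconn heuler' hab_mem hoa hob heven
  choose fc gc hfg hch using FiskProof.two_faces htwo
  set ab : ↥(edges F) := ⟨({a, b} : Finset V), hab_mem⟩ with hab'
  set cnt : ↥(edges F) → ℕ :=
    fun e => ∑ f : ↥F, if col f = 1 ∧ (e : Finset V) ⊆ (f : Finset V) then 1 else 0 with hcnt
  have hcnt_e : ∀ e : ↥(edges F),
      cnt e = (if col (fc e) = 1 then 1 else 0) + (if col (gc e) = 1 then 1 else 0) := by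
    intro e
    have hs : ∑ f ∈ ({fc e, gc e} : Finset ↥F),
        (if col f = 1 ∧ (e : Finset V) ⊆ (f : Finset V) then 1 else 0)
        = cnt e := by
      rw [hcnt]
      apply Finset.sum_subset (Finset.subset_univ _)
      intro f _ hf
      simp only [mem_insert, mem_singleton] at hf
      push_neg at hf
      have : ¬ ((e : Finset V) ⊆ (f : Finset V)) := by
        rw [hch e f]
        push_neg
        exact hf
      simp [this]
    rw [← hs, Finset.sum_pair (hfg e)]
    have h1 : (e : Finset V) ⊆ ((fc e : ↥F) : Finset V) := (hch e (fc e)).mpr (Or.inl rfl)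
    have h2 : (e : Finset V) ⊆ ((gc e : ↥F) : Finset V) := (hch e (gc e)).mpr (Or.inr rfl)
    rw [if_congr (and_iff_left h1) rfl rfl, if_congr (and_iff_left h2) rfl rfl]
  have hone : ∀ e : ↥(edges F), e ≠ ab → cnt e = 1 := by
    intro e he
    have hcoe : (e : Finset V) ≠ ({a, b} : Finset V) := by
      intro h
      exact he (Subtype.ext h)
    have := hcol e (fc e) (gc e) (hfg e) (hch e)
    rw [if_neg hcoe] at this
    rw [hcnt_e e]
    revert this
    generalize col (fc e) = x
    generalize col (gc e) = y
    revert x y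
    decide
  have habval : cnt ab = 0 ∨ cnt ab = 2 := by
    have := hcol ab (fc ab) (gc ab) (hfg ab) (hch ab)
    rw [if_pos rfl] at this
    rw [hcnt_e ab]
    revert this
    generalize col (fc ab) = x
    generalize col (gc ab) = y
    revert x y
    decide
  have hm : ∀ f : ↥F,
      (∑ e : ↥(edges F), if (e : Finset V) ⊆ (f : Finset V) then 1 else 0 : ℕ) = 3 := by
    intro f
    rw [Finset.sum_coe_sort (edges F) (fun e => if e ⊆ (f : Finset V) then (1 : ℕ) else 0)]
    rw [← Finset.card_filter]
    rw [filter_edges_subset f.2, Finset.card_powersetCard, hcard3 _ f.2]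
    decide
  have htot : 3 * F.card = 2 * (edges F).card := by
    have hswap := Finset.sum_comm (s := (univ : Finset ↥F)) (t := (univ : Finset ↥(edges F)))
      (f := fun f e => if (e : Finset V) ⊆ (f : Finset V) then (1 : ℕ) else 0)
    have hL : ∑ f : ↥F, ∑ e : ↥(edges F),
        (if (e : Finset V) ⊆ (f : Finset V) then 1 else 0 : ℕ) = 3 * F.card := by
      rw [Finset.sum_congr rfl fun f _ => hm f, Finset.sum_const, smul_eq_mul,
        Finset.card_univ, Fintype.card_coe, mul_comm]
    have hR : ∑ e : ↥(edges F), ∑ f : ↥F,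
        (if (e : Finset V) ⊆ (f : Finset V) then 1 else 0 : ℕ) = 2 * (edges F).card := by
      have hper : ∀ e : ↥(edges F), ∑ f : ↥F,
          (if (e : Finset V) ⊆ (f : Finset V) then 1 else 0 : ℕ) = 2 := by
        intro e
        rw [Finset.sum_coe_sort F (fun f => if (e : Finset V) ⊆ f then (1 : ℕ) else 0)]
        rw [← Finset.card_filter, htwo _ e.2]
      rw [Finset.sum_congr rfl fun e _ => hper e, Finset.sum_const, smul_eq_mul,
        Finset.card_univ, Fintype.card_coe, mul_comm]
    rw [← hL, hswap, hR]
  set T1 : ℕ := ((univ : Finset ↥F).filter (fun f => col f = 1)).card with hT1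
  have hA2 : ∑ e : ↥(edges F), cnt e = 3 * T1 := by
    have hswap := Finset.sum_comm (s := (univ : Finset ↥(edges F))) (t := (univ : Finset ↥F))
      (f := fun e f => if col f = 1 ∧ (e : Finset V) ⊆ (f : Finset V) then (1 : ℕ) else 0)
    rw [hcnt]
    rw [hswap]
    have hinner : ∀ f : ↥F, ∑ e : ↥(edges F),
        (if col f = 1 ∧ (e : Finset V) ⊆ (f : Finset V) then 1 else 0 : ℕ)
        = if col f = 1 then 3 else 0 := by
      intro f
      by_cases hc : col f = 1
      · rw [if_pos hc]
        rw [← hm f]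
        exact Finset.sum_congr rfl fun e _ => by rw [if_congr (and_iff_right hc) rfl rfl]
      · rw [if_neg hc]
        apply Finset.sum_eq_zero
        intro e _
        rw [if_neg (fun h => hc h.1)]
    rw [Finset.sum_congr rfl fun f _ => hinner f]
    rw [← Finset.sum_filter, Finset.sum_const, smul_eq_mul, ← hT1, mul_comm]
  have hA1 : ∑ e : ↥(edges F), cnt e
      = ((univ : Finset ↥(edges F)).erase ab).card + cnt ab := by
    rw [← Finset.sum_erase_add (univ : Finset ↥(edges F)) cnt (mem_univ ab)]
    congr 1
    rw [Finset.sum_congr rfl fun e he => hone e (Finset.ne_of_mem_erase he)]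
    rw [Finset.sum_const, smul_eq_mul, mul_one]
  have hcardE : ((univ : Finset ↥(edges F)).erase ab).card + 1 = (edges F).card := by
    rw [Finset.card_erase_add_one (mem_univ ab), Finset.card_univ, Fintype.card_coe]
  omega
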